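/- Let E ⊂ ℝ^N be measurable, α > 0, and u : [0,T] → L^{α+1}(E) be given via a measurable function u(x,t). Then t ↦ u(·,t) belongs to C([0,T]; L^{α+1}(E)) if and only if t ↦ |u|^{α-1}u(·,t) belongs to C([0,T]; L^{(α+1)/α}(E)). -/

import Mathlib

open MeasureTheory Set Filter
open scoped ENNReal NNReal

lemma tce_abs_phi {α : ℝ} (hα : 0 < α) (a : ℝ) : |(|a| ^ (α - 1) * a)| = |a| ^ α := by
  rcases eq_or_ne a 0 with rfl | ha
  · simp [Real.zero_rpow hα.ne']
  · rw [abs_mul, abs_of_nonneg (Real.rpow_nonneg (abs_nonneg a) _),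
      ← Real.rpow_add_one (abs_ne_zero.mpr ha), sub_add_cancel]

lemma tce_phi_phi {α : ℝ} (hα : 0 < α) (a : ℝ) :
    |(|a| ^ (α - 1) * a)| ^ (1 / α - 1) * (|a| ^ (α - 1) * a) = a := by
  rcases eq_or_ne a 0 with rfl | ha
  · simp
  · have h1 : (0:ℝ) < |a| := abs_pos.mpr ha
    rw [tce_abs_phi hα, ← Real.rpow_mul (abs_nonneg a),
      show α * (1 / α - 1) = 1 - α by field_simp, ← mul_assoc, ← Real.rpow_add h1,
      show 1 - α + (α - 1) = 0 by ring, Real.rpow_zero, one_mul]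

lemma tce_phi_cont {α : ℝ} (hα : 0 < α) : Continuous (fun a : ℝ => |a| ^ (α - 1) * a) := by
  rw [continuous_iff_continuousAt]
  intro x
  rcases eq_or_ne x 0 with rfl | hx
  · have h0 : (fun a : ℝ => |a| ^ (α - 1) * a) 0 = 0 := by simp
    rw [ContinuousAt]
    simp only [mul_zero]
    apply squeeze_zero_norm (a := fun b : ℝ => |b| ^ α)
    · intro a
      rw [Real.norm_eq_abs, tce_abs_phi hα a]
    · have : Tendsto (fun a : ℝ => |a| ^ α) (nhds 0) (nhds (|(0:ℝ)| ^ α)) :=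
        ((Real.continuous_rpow_const hα.le).comp continuous_abs).tendsto 0
      simpa [Real.zero_rpow hα.ne'] using this
  · exact (((Real.continuousAt_rpow_const _ _ (Or.inl (abs_ne_zero.mpr hx))).comp
      continuous_abs.continuousAt).mul continuousAt_id)

lemma tce_eLpNorm_phi {X : Type*} [MeasurableSpace X] (μ : Measure X) {α : ℝ} (hα : 0 < α)
    (f : X → ℝ) :
    eLpNorm (fun x => |f x| ^ (α - 1) * f x) (ENNReal.ofReal ((α + 1) / α)) μ
      = eLpNorm f (ENNReal.ofReal (α + 1)) μ ^ α := by
  have h1 : eLpNorm (fun x => |f x| ^ (α - 1) * f x) (ENNReal.ofReal ((α + 1) / α)) μ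
      = eLpNorm (fun x => ‖f x‖ ^ α) (ENNReal.ofReal ((α + 1) / α)) μ :=
    eLpNorm_congr_norm_ae (Eventually.of_forall fun x => by
      simp only [Real.norm_eq_abs, tce_abs_phi hα,
        abs_of_nonneg (Real.rpow_nonneg (abs_nonneg _) _)])
  rw [h1, eLpNorm_norm_rpow f hα, ← ENNReal.ofReal_mul (by positivity),
    div_mul_cancel₀ _ hα.ne']

lemma tce_memLp_phi {X : Type*} [MeasurableSpace X] {μ : Measure X} {α : ℝ} (hα : 0 < α)
    {f : X → ℝ} (hf : MemLp f (ENNReal.ofReal (α + 1)) μ) :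
    MemLp (fun x => |f x| ^ (α - 1) * f x) (ENNReal.ofReal ((α + 1) / α)) μ := by
  refine ⟨(tce_phi_cont hα).comp_aestronglyMeasurable hf.1, ?_⟩
  rw [tce_eLpNorm_phi μ hα f]
  exact ENNReal.rpow_lt_top_of_nonneg hα.le hf.2.ne

lemma tce_phi_of_nonneg {α : ℝ} (hα : 0 < α) {a : ℝ} (ha : 0 ≤ a) :
    |a| ^ (α - 1) * a = a ^ α := by
  rcases eq_or_lt_of_le ha with rfl | ha'
  · simp [Real.zero_rpow hα.ne']
  · rw [abs_of_nonneg ha, ← Real.rpow_add_one ha'.ne', sub_add_cancel]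

lemma tce_phi_neg {α : ℝ} (a : ℝ) : |(-a)| ^ (α - 1) * (-a) = -(|a| ^ (α - 1) * a) := by
  rw [abs_neg, mul_neg]

lemma tce_rpow_add_le {p x y : ℝ} (hx : 0 ≤ x) (hy : 0 ≤ y) (hp : 0 ≤ p) (hp1 : p ≤ 1) :
    (x + y) ^ p ≤ x ^ p + y ^ p := by
  have h := NNReal.rpow_add_le_add_rpow x.toNNReal y.toNNReal hp hp1
  have h' := NNReal.coe_le_coe.mpr h
  push_cast [NNReal.coe_rpow] at h'
  rwa [Real.coe_toNNReal x hx, Real.coe_toNNReal y hy] at h'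

lemma tce_aux1 {α : ℝ} (hα : 0 < α) (hα1 : α ≤ 1) {a b : ℝ} (hb : 0 ≤ b) (hba : b ≤ a) :
    |(|a| ^ (α - 1) * a) - (|b| ^ (α - 1) * b)| ≤ 2 * (a - b) ^ α := by
  have ha : 0 ≤ a := hb.trans hba
  rw [tce_phi_of_nonneg hα ha, tce_phi_of_nonneg hα hb,
    abs_of_nonneg (sub_nonneg.mpr (Real.rpow_le_rpow hb hba hα.le))]
  have h1 : a ^ α ≤ b ^ α + (a - b) ^ α := by
    calc a ^ α = (b + (a - b)) ^ α := by ring_nf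
    _ ≤ b ^ α + (a - b) ^ α := tce_rpow_add_le hb (by linarith) hα.le hα1
  have h2 : 0 ≤ (a - b) ^ α := Real.rpow_nonneg (by linarith) _
  linarith

lemma tce_aux2 {α : ℝ} (hα : 0 < α) {a b : ℝ} (hb : b ≤ 0) (ha : 0 ≤ a) :
    |(|a| ^ (α - 1) * a) - (|b| ^ (α - 1) * b)| ≤ 2 * (a - b) ^ α := by
  have hb' : |b| ^ (α - 1) * b = -((-b) ^ α) := by
    rw [← tce_phi_of_nonneg hα (neg_nonneg.mpr hb), abs_neg, mul_neg, neg_neg]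
  rw [tce_phi_of_nonneg hα ha, hb', sub_neg_eq_add]
  have h1 : a ^ α ≤ (a - b) ^ α := Real.rpow_le_rpow ha (by linarith) hα.le
  have h2 : (-b) ^ α ≤ (a - b) ^ α := Real.rpow_le_rpow (neg_nonneg.mpr hb) (by linarith) hα.le
  have h3 : 0 ≤ a ^ α := Real.rpow_nonneg ha _
  have h4 : 0 ≤ (-b) ^ α := Real.rpow_nonneg (neg_nonneg.mpr hb) _
  rw [abs_of_nonneg (by linarith)]
  linarith

lemma tce_ineq_small {α : ℝ} (hα : 0 < α) (hα1 : α ≤ 1) (a b : ℝ) :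
    |(|a| ^ (α - 1) * a) - (|b| ^ (α - 1) * b)| ≤ 2 * |a - b| ^ α := by
  suffices key : ∀ a b : ℝ, b ≤ a →
      |(|a| ^ (α - 1) * a) - (|b| ^ (α - 1) * b)| ≤ 2 * (a - b) ^ α by
    rcases le_total b a with h | h
    · rw [abs_of_nonneg (sub_nonneg.mpr h)]; exact key a b h
    · rw [abs_sub_comm, abs_sub_comm a b, abs_of_nonneg (sub_nonneg.mpr h)]; exact key b a h
  intro a b hba
  rcases le_or_gt 0 b with hb | hb
  · exact tce_aux1 hα hα1 hb hba
  rcases le_or_gt a 0 with ha | ha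
  · have := tce_aux1 hα hα1 (a := -b) (b := -a) (neg_nonneg.mpr ha) (by linarith)
    rw [tce_phi_neg, tce_phi_neg] at this
    rw [abs_sub_comm]
    calc |(|b| ^ (α - 1) * b) - (|a| ^ (α - 1) * a)| 
        = |(-(|b| ^ (α - 1) * b)) - (-(|a| ^ (α - 1) * a))| := by rw [← abs_neg]; ring_nf
      _ ≤ 2 * (-b - -a) ^ α := this
      _ = 2 * (a - b) ^ α := by ring_nf
  · exact tce_aux2 hα hb.le ha.le

lemma tce_hasDerivAt_pos {α : ℝ} (hα : 1 < α) {x : ℝ} (hx : 0 < x) :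
    HasDerivAt (fun a : ℝ => |a| ^ (α - 1) * a) (α * |x| ^ (α - 1)) x := by
  have h : HasDerivAt (fun y : ℝ => y ^ α) (α * x ^ (α - 1)) x :=
    Real.hasDerivAt_rpow_const (Or.inl hx.ne')
  rw [abs_of_pos hx]
  refine h.congr_of_eventuallyEq ?_
  filter_upwards [eventually_gt_nhds hx] with y hy
  rw [tce_phi_of_nonneg (by linarith : (0:ℝ) < α) hy.le]

lemma tce_hasDerivAt {α : ℝ} (hα : 1 < α) (x : ℝ) :
    HasDerivAt (fun a : ℝ => |a| ^ (α - 1) * a) (α * |x| ^ (α - 1)) x := by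
  rcases lt_trichotomy x 0 with hx | rfl | hx
  · have h := tce_hasDerivAt_pos hα (x := -x) (by linarith)
    have h2 := (h.comp x (hasDerivAt_neg x)).neg
    have he : (fun y : ℝ => -((fun a : ℝ => |a| ^ (α - 1) * a) (-y)))
        = fun a : ℝ => |a| ^ (α - 1) * a := by
      funext y
      show -(|(-y)| ^ (α - 1) * (-y)) = _
      rw [tce_phi_neg, neg_neg]
    rw [show (-((fun a : ℝ => |a| ^ (α - 1) * a) ∘ Neg.neg) : ℝ → ℝ)
        = (fun y : ℝ => -((fun a : ℝ => |a| ^ (α - 1) * a) (-y))) from rfl, he] at h2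
    refine h2.congr_deriv ?_
    rw [abs_neg]
    ring
  · rw [abs_zero, Real.zero_rpow (by linarith : α - 1 ≠ 0), mul_zero]
    rw [hasDerivAt_iff_tendsto_slope]
    have hev : (fun y : ℝ => |y| ^ (α - 1)) =ᶠ[nhdsWithin 0 {(0:ℝ)}ᶜ]
        slope (fun a : ℝ => |a| ^ (α - 1) * a) 0 := by
      filter_upwards [self_mem_nhdsWithin] with y (hy : y ≠ 0)
      rw [slope_def_field]
      field_simp
      simp
    refine Tendsto.congr' hev ?_
    have hc : Tendsto (fun y : ℝ => |y| ^ (α - 1)) (nhds 0) (nhds (|(0:ℝ)| ^ (α - 1))) :=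
      ((Real.continuous_rpow_const (by linarith)).comp continuous_abs).tendsto 0
    rw [abs_zero, Real.zero_rpow (by linarith : α - 1 ≠ 0)] at hc
    exact hc.mono_left nhdsWithin_le_nhds
  · exact tce_hasDerivAt_pos hα hx

lemma tce_ineq_big {α : ℝ} (hα : 1 < α) (a b : ℝ) :
    |(|a| ^ (α - 1) * a) - (|b| ^ (α - 1) * b)| ≤ α * (|a| ^ (α - 1) + |b| ^ (α - 1)) * |a - b| := by
  suffices key : ∀ a b : ℝ, b ≤ a →
      |(|a| ^ (α - 1) * a) - (|b| ^ (α - 1) * b)| ≤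
        α * (|a| ^ (α - 1) + |b| ^ (α - 1)) * |a - b| by
    rcases le_total b a with h | h
    · exact key a b h
    · rw [abs_sub_comm, abs_sub_comm a b, add_comm]; exact key b a h
  intro a b hba
  have hC : ∀ y ∈ Icc b a, α * |y| ^ (α - 1) ≤ α * (|a| ^ (α - 1) + |b| ^ (α - 1)) := by
    intro y hy
    apply mul_le_mul_of_nonneg_left _ (by linarith : (0:ℝ) ≤ α)
    have hy' : |y| ≤ max |a| |b| := by
      rw [abs_le]
      constructor
      · calc -(max |a| |b|) ≤ -|b| := by simp
          _ ≤ b := neg_abs_le b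
          _ ≤ y := hy.1
      · calc y ≤ a := hy.2
          _ ≤ |a| := le_abs_self a
          _ ≤ max |a| |b| := le_max_left _ _
    calc |y| ^ (α - 1) ≤ (max |a| |b|) ^ (α - 1) :=
          Real.rpow_le_rpow (abs_nonneg y) hy' (by linarith)
      _ ≤ |a| ^ (α - 1) + |b| ^ (α - 1) := by
          rcases max_cases |a| |b| with ⟨h1, _⟩ | ⟨h1, _⟩ <;> rw [h1]
          · have := Real.rpow_nonneg (abs_nonneg b) (α - 1); linarith
          · have := Real.rpow_nonneg (abs_nonneg a) (α - 1); linarith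
  have hmvt := norm_image_sub_le_of_norm_deriv_le_segment'
    (f := fun y : ℝ => |y| ^ (α - 1) * y) (f' := fun y : ℝ => α * |y| ^ (α - 1))
    (C := α * (|a| ^ (α - 1) + |b| ^ (α - 1)))
    (fun y hy => (tce_hasDerivAt hα y).hasDerivWithinAt)
    (fun y hy => by
      rw [Real.norm_eq_abs, abs_of_nonneg (by positivity)]
      exact hC y (Ico_subset_Icc_self hy))
    a (right_mem_Icc.mpr hba)
  rw [Real.norm_eq_abs] at hmvt
  rwa [abs_of_nonneg (sub_nonneg.mpr hba)]

lemma tce_eLpNorm_abs_rpow {X : Type*} [MeasurableSpace X] (μ : Measure X) {β q : ℝ}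
    (hβ : 0 < β) (hq : 0 ≤ q) (f : X → ℝ) :
    eLpNorm (fun x => |f x| ^ β) (ENNReal.ofReal (q / β)) μ
      = eLpNorm f (ENNReal.ofReal q) μ ^ β := by
  have h : (fun x => |f x| ^ β) = fun x => ‖f x‖ ^ β := by
    funext x; rw [Real.norm_eq_abs]
  rw [h, eLpNorm_norm_rpow f hβ, ← ENNReal.ofReal_mul (div_nonneg hq hβ.le),
    div_mul_cancel₀ _ hβ.ne']

lemma tce_forward {X : Type*} [MeasurableSpace X] (μ : Measure X) (α T : ℝ) (hα : 0 < α)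
    (u : ℝ → X → ℝ)
    (h1 : ∀ t ∈ Icc (0:ℝ) T, MemLp (u t) (ENNReal.ofReal (α + 1)) μ)
    (h2 : ∀ t₀ ∈ Icc (0:ℝ) T, Tendsto (fun t => eLpNorm (fun x => u t x - u t₀ x)
        (ENNReal.ofReal (α + 1)) μ) (nhdsWithin t₀ (Icc (0:ℝ) T)) (nhds 0)) :
    (∀ t ∈ Icc (0:ℝ) T, MemLp (fun x => |u t x| ^ (α - 1) * u t x)
        (ENNReal.ofReal ((α + 1) / α)) μ) ∧
    ∀ t₀ ∈ Icc (0:ℝ) T, Tendsto (fun t => eLpNorm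
        (fun x => |u t x| ^ (α - 1) * u t x - |u t₀ x| ^ (α - 1) * u t₀ x)
        (ENNReal.ofReal ((α + 1) / α)) μ) (nhdsWithin t₀ (Icc (0:ℝ) T)) (nhds 0) := by
  refine ⟨fun t ht => tce_memLp_phi hα (h1 t ht), fun t₀ ht₀ => ?_⟩
  have hF := h2 t₀ ht₀
  rcases lt_trichotomy α 1 with hα1 | rfl | hα1
  · -- case α < 1
    have key : ∀ t, eLpNorm
        (fun x => |u t x| ^ (α - 1) * u t x - |u t₀ x| ^ (α - 1) * u t₀ x)
        (ENNReal.ofReal ((α + 1) / α)) μ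
        ≤ 2 * eLpNorm (fun x => u t x - u t₀ x) (ENNReal.ofReal (α + 1)) μ ^ α := by
      intro t
      have step1 : eLpNorm
          (fun x => |u t x| ^ (α - 1) * u t x - |u t₀ x| ^ (α - 1) * u t₀ x)
          (ENNReal.ofReal ((α + 1) / α)) μ
          ≤ eLpNorm ((2:ℝ) • fun x => |u t x - u t₀ x| ^ α) (ENNReal.ofReal ((α + 1) / α)) μ := by
        apply eLpNorm_mono
        intro x
        simp only [Pi.smul_apply, smul_eq_mul, Real.norm_eq_abs]
        rw [abs_of_nonneg (by positivity : (0:ℝ) ≤ 2 * |u t x - u t₀ x| ^ α)]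
        exact tce_ineq_small hα hα1.le _ _
      refine step1.trans ?_
      rw [eLpNorm_const_smul, tce_eLpNorm_abs_rpow μ hα (by linarith)]
      gcongr
      simp [Real.enorm_eq_ofReal]
    have h0 : Tendsto (fun t => 2 * eLpNorm (fun x => u t x - u t₀ x)
        (ENNReal.ofReal (α + 1)) μ ^ α) (nhdsWithin t₀ (Icc (0:ℝ) T)) (nhds 0) := by
      have hr : Tendsto (fun t => eLpNorm (fun x => u t x - u t₀ x)
          (ENNReal.ofReal (α + 1)) μ ^ α) (nhdsWithin t₀ (Icc (0:ℝ) T)) (nhds 0) := by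
        have := (ENNReal.continuous_rpow_const (y := α)).tendsto 0 |>.comp hF
        rwa [ENNReal.zero_rpow_of_pos hα] at this
      have := ENNReal.Tendsto.const_mul (a := 2) hr (Or.inr (by simp))
      rwa [mul_zero] at this
    exact tendsto_of_tendsto_of_tendsto_of_le_of_le tendsto_const_nhds h0
      (fun t => zero_le) key
  · -- case α = 1
    simp only [show (1:ℝ) - 1 = 0 by norm_num, Real.rpow_zero, one_mul,
      show ((1:ℝ) + 1) / 1 = 1 + 1 by norm_num]
    exact hF
  · -- case 1 < α
    set p : ℝ≥0∞ := ENNReal.ofReal (α + 1) with hp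
    set p' : ℝ≥0∞ := ENNReal.ofReal ((α + 1) / α) with hp'
    set q : ℝ≥0∞ := ENNReal.ofReal ((α + 1) / (α - 1)) with hq
    have hα1' : (0:ℝ) < α - 1 := by linarith
    have hq1 : (1:ℝ≥0∞) ≤ q := by
      rw [hq, ENNReal.one_le_ofReal, le_div_iff₀ hα1']
      linarith
    have hp1 : (1:ℝ≥0∞) ≤ p := by
      rw [hp, ENNReal.one_le_ofReal]; linarith
    set B : ℝ → ℝ≥0∞ := fun t => eLpNorm (u t) p μ with hB
    set M : ℝ≥0∞ := B t₀ + 1 with hM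
    have hMlt : M ≠ ⊤ := by
      rw [hM]
      exact (ENNReal.add_lt_top.mpr ⟨(h1 t₀ ht₀).2, ENNReal.one_lt_top⟩).ne
    set C : ℝ≥0∞ := (‖α‖₊ : ℝ≥0∞) * (M ^ (α - 1) + M ^ (α - 1)) with hC
    have hCne : C ≠ ⊤ := by
      rw [hC]
      refine ENNReal.mul_ne_top ENNReal.coe_ne_top ?_
      exact (ENNReal.add_lt_top.mpr ⟨ENNReal.rpow_lt_top_of_nonneg hα1'.le hMlt,
        ENNReal.rpow_lt_top_of_nonneg hα1'.le hMlt⟩).ne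
    -- eventual bound
    have hev : ∀ᶠ t in nhdsWithin t₀ (Icc (0:ℝ) T),
        eLpNorm (fun x => |u t x| ^ (α - 1) * u t x - |u t₀ x| ^ (α - 1) * u t₀ x) p' μ
          ≤ C * eLpNorm (fun x => u t x - u t₀ x) p μ := by
      filter_upwards [eventually_mem_nhdsWithin,
        hF.eventually_lt_const (by norm_num : (0:ℝ≥0∞) < 1)] with t ht hFt
      have hut : AEStronglyMeasurable (u t) μ := (h1 t ht).1
      have hut₀ : AEStronglyMeasurable (u t₀) μ := (h1 t₀ ht₀).1
      have hΔ : AEStronglyMeasurable (fun x => u t x - u t₀ x) μ := hut.sub hut₀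
      set φ : X → ℝ := fun x => α * (|u t x| ^ (α - 1) + |u t₀ x| ^ (α - 1)) with hφdef
      have hg : ∀ v : X → ℝ, AEStronglyMeasurable v μ →
          AEStronglyMeasurable (fun x => |v x| ^ (α - 1)) μ := fun v hv =>
        ((Real.continuous_rpow_const hα1'.le).comp continuous_abs).comp_aestronglyMeasurable hv
      have hφ : AEStronglyMeasurable φ μ :=
        (((hg _ hut).add (hg _ hut₀)).const_mul α)
      have hpqr : 1 / p' = 1 / q + 1 / p := by
        rw [hp', hq, hp, one_div, one_div, one_div,
          ← ENNReal.ofReal_inv_of_pos (by positivity),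
          ← ENNReal.ofReal_inv_of_pos (by positivity),
          ← ENNReal.ofReal_inv_of_pos (by positivity),
          ← ENNReal.ofReal_add (by positivity) (by positivity)]
        congr 1
        field_simp
        ring
      have step1 : eLpNorm
          (fun x => |u t x| ^ (α - 1) * u t x - |u t₀ x| ^ (α - 1) * u t₀ x) p' μ
          ≤ eLpNorm (φ • fun x => u t x - u t₀ x) p' μ := by
        apply eLpNorm_mono
        intro x
        simp only [Pi.smul_apply, smul_eq_mul, Pi.mul_apply, Real.norm_eq_abs, hφdef]
        rw [abs_mul, abs_of_nonneg (by positivity : (0:ℝ) ≤ α * (|u t x| ^ (α - 1) + |u t₀ x| ^ (α - 1)))]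
        calc |(|u t x| ^ (α - 1) * u t x) - (|u t₀ x| ^ (α - 1) * u t₀ x)|
            ≤ α * (|u t x| ^ (α - 1) + |u t₀ x| ^ (α - 1)) * |u t x - u t₀ x| :=
              tce_ineq_big hα1 _ _
          _ = _ := by ring
      have step2 : eLpNorm (φ • fun x => u t x - u t₀ x) p' μ
          ≤ eLpNorm φ q μ * eLpNorm (fun x => u t x - u t₀ x) p μ :=
        eLpNorm_smul_le_mul_eLpNorm hΔ hφ (hpqr := ⟨by simpa [one_div] using hpqr.symm⟩)
      have step3 : eLpNorm φ q μ ≤ C := by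
        have e1 : φ = α • ((fun x => |u t x| ^ (α - 1)) + fun x => |u t₀ x| ^ (α - 1)) := by
          funext x; simp [hφdef, mul_add]
        rw [e1, eLpNorm_const_smul, hC]
        gcongr ?_ * ?_
        · exact le_refl _
        refine (eLpNorm_add_le (hg _ hut) (hg _ hut₀) hq1).trans ?_
        have hBt : B t ≤ M := by
          rw [hM]
          have := eLpNorm_add_le hΔ hut₀ hp1
          have he : (fun x => u t x - u t₀ x) + u t₀ = u t := by funext x; simp
          rw [he] at this
          calc B t ≤ eLpNorm (fun x => u t x - u t₀ x) p μ + eLpNorm (u t₀) p μ := this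
            _ ≤ B t₀ + 1 := by
                rw [add_comm (B t₀)]
                gcongr
        have hBt₀ : B t₀ ≤ M := by rw [hM]; exact le_self_add
        have eg : ∀ v : X → ℝ, eLpNorm (fun x => |v x| ^ (α - 1)) q μ
            = eLpNorm v p μ ^ (α - 1) := fun v => tce_eLpNorm_abs_rpow μ hα1' (by linarith) v
        rw [eg, eg]
        gcongr
      calc eLpNorm (fun x => |u t x| ^ (α - 1) * u t x - |u t₀ x| ^ (α - 1) * u t₀ x) p' μ
          ≤ eLpNorm φ q μ * eLpNorm (fun x => u t x - u t₀ x) p μ := step1.trans step2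
        _ ≤ C * eLpNorm (fun x => u t x - u t₀ x) p μ := by gcongr
    have h0 : Tendsto (fun t => C * eLpNorm (fun x => u t x - u t₀ x) p μ)
        (nhdsWithin t₀ (Icc (0:ℝ) T)) (nhds 0) := by
      have := ENNReal.Tendsto.const_mul (a := C) hF (Or.inr hCne)
      rwa [mul_zero] at this
    exact tendsto_of_tendsto_of_tendsto_of_le_of_le' tendsto_const_nhds h0
      (Eventually.of_forall fun t => zero_le) hev

theorem time_continuity_equivalence (N : ℕ) (E : Set (Fin N → ℝ)) (hE : MeasurableSet E)
    (α T : ℝ) (hα : 0 < α) (hT : 0 < T) (u : ℝ → (Fin N → ℝ) → ℝ) :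
    ((∀ t ∈ Icc (0 : ℝ) T, MemLp (u t) (ENNReal.ofReal (α + 1)) (volume.restrict E)) ∧
      ∀ t₀ ∈ Icc (0 : ℝ) T,
        Tendsto (fun t => eLpNorm (fun x => u t x - u t₀ x)
            (ENNReal.ofReal (α + 1)) (volume.restrict E))
          (nhdsWithin t₀ (Icc (0 : ℝ) T)) (nhds 0)) ↔
    ((∀ t ∈ Icc (0 : ℝ) T, MemLp (fun x => |u t x| ^ (α - 1) * u t x)
        (ENNReal.ofReal ((α + 1) / α)) (volume.restrict E)) ∧
      ∀ t₀ ∈ Icc (0 : ℝ) T,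
        Tendsto (fun t => eLpNorm
            (fun x => |u t x| ^ (α - 1) * u t x - |u t₀ x| ^ (α - 1) * u t₀ x)
            (ENNReal.ofReal ((α + 1) / α)) (volume.restrict E))
          (nhdsWithin t₀ (Icc (0 : ℝ) T)) (nhds 0)) := by
  set μ := volume.restrict E
  constructor
  · intro h
    exact tce_forward μ α T hα u h.1 h.2
  · intro h
    have hα' : (0:ℝ) < 1 / α := by positivity
    have e1 : ENNReal.ofReal (1 / α + 1) = ENNReal.ofReal ((α + 1) / α) := by
      congr 1
      field_simp
      ring
    have e2 : ENNReal.ofReal ((1 / α + 1) / (1 / α)) = ENNReal.ofReal (α + 1) := by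
      congr 1
      rw [div_div_eq_mul_div]
      field_simp
      ring
    have H := tce_forward μ (1 / α) T hα' (fun t x => |u t x| ^ (α - 1) * u t x)
      (fun t ht => e1 ▸ h.1 t ht) (fun t₀ ht₀ => by rw [e1]; exact h.2 t₀ ht₀)
    simp only [e2, tce_phi_phi hα] at H
    exact H
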